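/- arXiv:2008.05045 — 2 statements merged into one kernel-verified Lean document; each statement's English description precedes it below -/
import Mathlib

section
/- If H : ℂⁿ×ⁿ is a complex symmetric matrix whose real part Re(H) (entrywise real parts) is a negative definite real symmetric matrix, then H is nonsingular, i.e. det(H) ≠ 0. -/
/-- A complex symmetric matrix whose entrywise real part is negative definite is nonsingular. -/
theorem det_ne_zero_of_re_negDef (n : ℕ) (H : Matrix (Fin n) (Fin n) ℂ)
    (hsymm : H.transpose = H)
    (hneg : (-(H.map Complex.re)).PosDef) :
    H.det ≠ 0 := by
  intro hdet
  obtain ⟨v, hv0, hv⟩ := (Matrix.exists_mulVec_eq_zero_iff).2 hdet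
  set A : Matrix (Fin n) (Fin n) ℝ := H.map Complex.re with hA
  set B : Matrix (Fin n) (Fin n) ℝ := H.map Complex.im with hB
  set x : Fin n → ℝ := fun i => (v i).re with hx
  set y : Fin n → ℝ := fun i => (v i).im with hy
  have hBsymm : B.transpose = B := by
    rw [hB, ← Matrix.transpose_map, hsymm]
  have hre : A.mulVec x = B.mulVec y := by
    funext i
    have h1 := congrFun hv i
    have h2 := congrArg Complex.re h1
    simp [Matrix.mulVec, dotProduct, Complex.re_sum, Complex.mul_re,
      Finset.sum_sub_distrib] at h2
    simp [Matrix.mulVec, dotProduct, hA, hB, hx, hy, Matrix.map_apply]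
    linarith
  have him : A.mulVec y = -(B.mulVec x) := by
    funext i
    have h1 := congrFun hv i
    have h2 := congrArg Complex.im h1
    simp [Matrix.mulVec, dotProduct, Complex.im_sum, Complex.mul_im,
      Finset.sum_add_distrib] at h2
    simp [Matrix.mulVec, dotProduct, hA, hB, hx, hy, Matrix.map_apply]
    linarith
  have key : dotProduct x (A.mulVec x) + dotProduct y (A.mulVec y) = 0 := by
    rw [hre, him]
    have : dotProduct y (B.mulVec x) = dotProduct x (B.mulVec y) := by
      rw [Matrix.dotProduct_mulVec, ← Matrix.mulVec_transpose, hBsymm,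
        dotProduct_comm]
    simp [this]
  have hsd := hneg.posSemidef
  have hnx : 0 ≤ dotProduct x ((-A).mulVec x) := by
    have := hsd.dotProduct_mulVec_nonneg x; simpa using this
  have hny : 0 ≤ dotProduct y ((-A).mulVec y) := by
    have := hsd.dotProduct_mulVec_nonneg y; simpa using this
  have hsum : dotProduct x ((-A).mulVec x) + dotProduct y ((-A).mulVec y) = 0 := by
    simp [Matrix.neg_mulVec]
    linarith [key]
  have hxy : x ≠ 0 ∨ y ≠ 0 := by
    by_contra h
    push_neg at h
    apply hv0
    funext i
    have h1 : (v i).re = 0 := congrFun h.1 i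
    have h2 : (v i).im = 0 := congrFun h.2 i
    exact Complex.ext h1 h2
  rcases hxy with h | h
  · have := hneg.dotProduct_mulVec_pos h
    simp at this
    nlinarith [this]
  · have := hneg.dotProduct_mulVec_pos h
    simp at this
    nlinarith [this]
end

section
/- The Lobachevsky function Λ(θ) = −∫₀^θ log|2 sin t| dt is an odd function of period π: Λ(−θ) = −Λ(θ) and Λ(θ + π) = Λ(θ) for all real θ. -/
open Real

/-- The Lobachevsky function. -/
noncomputable def lob (θ : ℝ) : ℝ := -∫ t in (0:ℝ)..θ, Real.log |2 * Real.sin t|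

open Real MeasureTheory Set intervalIntegral

namespace LobAux

/-- The integrand. -/
noncomputable def f (t : ℝ) : ℝ := Real.log |2 * Real.sin t|

lemma f_neg (t : ℝ) : f (-t) = f t := by simp [f]

lemma f_periodic : Function.Periodic f π := by
  intro t
  simp [f, Real.sin_add_pi, mul_neg, abs_neg]

lemma f_meas : Measurable f :=
  Real.measurable_log.comp (continuous_abs.comp
    (continuous_const.mul Real.continuous_sin)).measurable

/-- `log` is interval integrable on `[0,1]`. -/
lemma intInt_log01 : IntervalIntegrable Real.log volume 0 1 := by
  have h : IntervalIntegrable (fun x : ℝ => -Real.log x) volume 0 1 := by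
    apply intervalIntegral.intervalIntegrable_deriv_of_nonneg
      (g := fun x : ℝ => x - x * Real.log x)
    · exact (continuous_id.sub Real.continuous_mul_log).continuousOn
    · intro x hx
      simp only [min_def, max_def] at hx
      norm_num at hx
      have hx0 : x ≠ 0 := ne_of_gt hx.1
      have : HasDerivAt (fun x : ℝ => x - x * Real.log x) (1 - (Real.log x + 1)) x :=
        (hasDerivAt_id x).sub (Real.hasDerivAt_mul_log hx0)
      simpa using this
    · intro x hx
      simp only [min_def, max_def] at hx
      norm_num at hx
      simp only [neg_nonneg]
      exact Real.log_nonpos hx.1.le hx.2.le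
  have h2 := h.neg
  have heq : (-fun x : ℝ => -Real.log x) = Real.log := by
    funext x; simp
  rwa [heq] at h2

lemma intInt_abs_log01 : IntervalIntegrable (fun x => |Real.log x|) volume 0 1 :=
  intInt_log01.abs

/-- `f` is interval integrable on `[0, π/2]`. -/
lemma intInt_f_half : IntervalIntegrable f volume 0 (π / 2) := by
  have hπ : (0:ℝ) < π := Real.pi_pos
  have hg : IntervalIntegrable (fun x => |Real.log x| + Real.log π) volume 0 (π / 2) := by
    have h1 : IntervalIntegrable (fun x => |Real.log x|) volume 0 1 := intInt_abs_log01
    have h2 : IntervalIntegrable (fun x => |Real.log x|) volume 1 (π / 2) := by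
      apply ContinuousOn.intervalIntegrable
      apply ContinuousOn.abs
      apply Real.continuousOn_log.mono
      intro x hx
      rw [mem_uIcc] at hx
      simp only [mem_compl_iff, mem_singleton_iff]
      intro h
      subst h
      rcases hx with ⟨h1', h2'⟩ | ⟨h1', h2'⟩ <;> linarith [Real.pi_gt_three]
    exact (h1.trans h2).add intervalIntegrable_const
  apply IntervalIntegrable.mono_fun hg f_meas.aestronglyMeasurable
  rw [Filter.EventuallyLE, ae_restrict_iff' measurableSet_uIoc]
  apply Filter.Eventually.of_forall
  intro t ht
  rw [uIoc_of_le (by positivity)] at ht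
  have ht0 : 0 < t := ht.1
  have htπ : t ≤ π / 2 := ht.2
  have hsin : 0 < Real.sin t := Real.sin_pos_of_pos_of_lt_pi ht0 (by linarith)
  have hub : 2 * Real.sin t ≤ π := by
    have := Real.sin_le ht0.le
    linarith
  have hlb : t ≤ 2 * Real.sin t := by
    have h' : 2 / π * t ≤ Real.sin t := Real.mul_le_sin ht0.le (by linarith)
    have h'' : 2 * t ≤ Real.sin t * π := by
      rw [div_mul_eq_mul_div, div_le_iff₀ hπ] at h'
      linarith
    nlinarith [Real.pi_le_four]
  have habs : |2 * Real.sin t| = 2 * Real.sin t := abs_of_pos (by linarith)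
  have hlogπ : 0 ≤ Real.log π := Real.log_nonneg (by linarith [Real.pi_gt_three])
  have h1 : Real.log (2 * Real.sin t) ≤ Real.log π := Real.log_le_log (by linarith) hub
  have h2 : Real.log t ≤ Real.log (2 * Real.sin t) := Real.log_le_log ht0 hlb
  have hlog2 : |Real.log (2 * Real.sin t)| ≤ |Real.log t| + Real.log π := by
    rw [abs_le]
    constructor
    · linarith [neg_abs_le (Real.log t)]
    · linarith [abs_nonneg (Real.log t)]
  simp only [f, Real.norm_eq_abs, habs]
  rw [abs_of_nonneg (add_nonneg (abs_nonneg _) hlogπ)]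
  exact hlog2

/-- `log |2 cos ·|` integrability / relation to `f` by reflection at `π/2`. -/
lemma cos_eq_reflect : (fun x => f (π/2 - x)) = fun x => Real.log |2 * Real.cos x| := by
  funext x
  simp [f, Real.sin_pi_div_two_sub]

/-- `f` is interval integrable on `[0, π]`. -/
lemma intInt_f_pi : IntervalIntegrable f volume 0 π := by
  have h1 : IntervalIntegrable f volume 0 (π / 2) := intInt_f_half
  have h2 : IntervalIntegrable f volume (π / 2) π := by
    have h := h1.comp_sub_left π
    have e1 : π - π / 2 = π / 2 := by ring
    rw [e1, sub_zero] at h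
    have heq : (fun x => f (π - x)) = f := by
      funext x
      simp [f, Real.sin_pi_sub]
    rw [heq] at h
    exact h.symm
  exact h1.trans h2

/-- `f` is interval integrable on every interval. -/
lemma intInt_f (a b : ℝ) : IntervalIntegrable f volume a b := by
  have hπ : (0:ℝ) < π := Real.pi_pos
  have hstep : ∀ n : ℕ, IntervalIntegrable f volume (n * π) ((n + 1) * π) := by
    intro n
    have h := intInt_f_pi.comp_sub_right (n * π)
    have heq : (fun x => f (x - n * π)) = f := by
      funext x
      have := (f_periodic.nat_mul n) (x - n * π)
      simpa [sub_add_cancel] using this.symm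
    rw [heq] at h
    have e1 : 0 + (n:ℝ) * π = n * π := by ring
    have e2 : π + (n:ℝ) * π = ((n:ℝ) + 1) * π := by ring
    rwa [e1, e2] at h
  have h0n : ∀ n : ℕ, IntervalIntegrable f volume 0 ((n:ℝ) * π) := by
    intro n
    induction n with
    | zero => simp
    | succ k ih =>
      have h := ih.trans (hstep k)
      have e : ((k:ℝ) + 1) * π = (((k+1 : ℕ)):ℝ) * π := by push_cast; ring
      rwa [e] at h
  have hsym : ∀ n : ℕ, IntervalIntegrable f volume (-((n:ℝ) * π)) ((n:ℝ) * π) := by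
    intro n
    have h1 : IntervalIntegrable f volume 0 ((n:ℝ) * π) := h0n n
    have h2 : IntervalIntegrable (fun x => f (-x)) volume (-0) (-((n:ℝ) * π)) :=
      (IntervalIntegrable.iff_comp_neg (by simp)).mp h1
    have heq : (fun x : ℝ => f (-x)) = f := funext f_neg
    rw [heq] at h2
    simp only [neg_zero] at h2
    exact h2.symm.trans h1
  obtain ⟨n, hn⟩ := exists_nat_ge (max |a| |b|)
  have hnπ : max |a| |b| ≤ (n:ℝ) * π := by
    calc max |a| |b| ≤ n := hn
    _ ≤ (n:ℝ) * π := by nlinarith [Real.pi_gt_three, Nat.cast_nonneg (α := ℝ) n]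
  have hn0 : 0 ≤ (n:ℝ) * π := by positivity
  apply (hsym n).mono_set
  rw [uIcc_subset_uIcc_iff_le]
  have hmin : min (-((n:ℝ) * π)) ((n:ℝ) * π) = -((n:ℝ) * π) := min_eq_left (by linarith)
  have hmax : max (-((n:ℝ) * π)) ((n:ℝ) * π) = (n:ℝ) * π := max_eq_right (by linarith)
  rw [hmin, hmax]
  constructor
  · apply le_min
    · linarith [neg_abs_le a, le_max_left |a| |b|]
    · linarith [neg_abs_le b, le_max_right |a| |b|]
  · apply max_le
    · linarith [le_abs_self a, le_max_left |a| |b|]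
    · linarith [le_abs_self b, le_max_right |a| |b|]

/-- The set where `sin` or `cos` vanishes is null. -/
lemma null_bad : volume {t : ℝ | Real.sin t = 0 ∨ Real.cos t = 0} = 0 := by
  have hcount : {t : ℝ | Real.sin t = 0 ∨ Real.cos t = 0}.Countable := by
    have h1 : {t : ℝ | Real.sin t = 0} ⊆ Set.range (fun n : ℤ => (n : ℝ) * π) := by
      intro t ht
      obtain ⟨n, hn⟩ := Real.sin_eq_zero_iff.mp ht
      exact ⟨n, hn⟩
    have h2 : {t : ℝ | Real.cos t = 0} ⊆ Set.range (fun n : ℤ => (2 * n + 1) * π / 2) := by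
      intro t ht
      obtain ⟨n, hn⟩ := Real.cos_eq_zero_iff.mp ht
      exact ⟨n, hn.symm⟩
    have hsub : {t : ℝ | Real.sin t = 0 ∨ Real.cos t = 0} ⊆
        Set.range (fun n : ℤ => (n : ℝ) * π) ∪ Set.range (fun n : ℤ => (2 * n + 1) * π / 2) := by
      intro t ht
      rcases ht with h | h
      · exact Or.inl (h1 h)
      · exact Or.inr (h2 h)
    exact Set.Countable.mono hsub ((Set.countable_range _).union (Set.countable_range _))
  exact hcount.measure_zero _

/-- The key vanishing: `∫ t in 0..π, log |2 sin t| = 0`. -/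
lemma integral_f_pi : ∫ t in (0:ℝ)..π, f t = 0 := by
  have hπ : (0:ℝ) < π := Real.pi_pos
  set J := ∫ t in (0:ℝ)..(π/2), f t with hJ
  have hK : ∫ t in (0:ℝ)..(π/2), Real.log |2 * Real.cos t| = J := by
    have h : ∫ t in (0:ℝ)..(π/2), f (π/2 - t) = ∫ t in (π/2 - π/2)..(π/2 - 0), f t :=
      intervalIntegral.integral_comp_sub_left f (π/2)
    rw [sub_self, sub_zero, cos_eq_reflect] at h
    rw [hJ, ← h]
  have hsecond : ∫ t in (π/2)..π, f t = J := by
    have h : ∫ t in (0:ℝ)..(π/2), f (π - t) = ∫ t in (π - π/2)..(π - 0), f t :=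
      intervalIntegral.integral_comp_sub_left f π
    have e1 : π - π/2 = π/2 := by ring
    rw [e1, sub_zero] at h
    have heq : (fun x => f (π - x)) = f := by
      funext x
      simp [f, Real.sin_pi_sub]
    rw [heq] at h
    rw [← h, hJ]
  have htotal : ∫ t in (0:ℝ)..π, f t = 2 * J := by
    rw [← intervalIntegral.integral_add_adjacent_intervals
      (intInt_f 0 (π/2)) (intInt_f (π/2) π), hsecond]
    rw [hJ]; ring
  have hdouble : ∫ t in (0:ℝ)..(π/2), f (2 * t) = (1/2) * ∫ t in (0:ℝ)..π, f t := by
    have h : ∫ t in (0:ℝ)..(π/2), f (2 * t) = (2:ℝ)⁻¹ • ∫ t in (2*0:ℝ)..(2*(π/2)), f t :=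
      intervalIntegral.integral_comp_mul_left f two_ne_zero
    have e1 : (2:ℝ) * 0 = 0 := by ring
    have e2 : (2:ℝ) * (π/2) = π := by ring
    rw [e1, e2] at h
    rw [h, smul_eq_mul]
    ring
  have hsplit : ∫ t in (0:ℝ)..(π/2), f (2 * t)
      = ∫ t in (0:ℝ)..(π/2), (f t + Real.log |2 * Real.cos t|) := by
    have hsub : {t : ℝ | ¬ (f (2*t) = f t + Real.log |2 * Real.cos t|)} ⊆
        {t : ℝ | Real.sin t = 0 ∨ Real.cos t = 0} := by
      intro t ht
      simp only [mem_setOf_eq] at ht ⊢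
      by_contra hgood
      push_neg at hgood
      apply ht
      have hs : Real.sin t ≠ 0 := hgood.1
      have hc : Real.cos t ≠ 0 := hgood.2
      have habs : |2 * Real.sin (2*t)| = |2 * Real.sin t| * |2 * Real.cos t| := by
        rw [Real.sin_two_mul, abs_mul, abs_mul, abs_mul, abs_mul, abs_two]
        ring
      show Real.log |2 * Real.sin (2*t)| = Real.log |2 * Real.sin t| + Real.log |2 * Real.cos t|
      rw [habs, Real.log_mul (abs_ne_zero.mpr (mul_ne_zero two_ne_zero hs))
        (abs_ne_zero.mpr (mul_ne_zero two_ne_zero hc))]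
    have h0 : ∀ᵐ t : ℝ, f (2*t) = f t + Real.log |2 * Real.cos t| := by
      rw [ae_iff]
      exact measure_mono_null hsub null_bad
    exact intervalIntegral.integral_congr_ae (h0.mono fun t ht _ => ht)
  have hg2 : IntervalIntegrable (fun x => Real.log |2 * Real.cos x|) volume 0 (π/2) := by
    have h := (intInt_f 0 (π/2)).comp_sub_left (π/2)
    rw [sub_zero, sub_self, cos_eq_reflect] at h
    exact h.symm
  have hadd : ∫ t in (0:ℝ)..(π/2), (f t + Real.log |2 * Real.cos t|)
      = J + ∫ t in (0:ℝ)..(π/2), Real.log |2 * Real.cos t| := by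
    rw [intervalIntegral.integral_add (intInt_f 0 (π/2)) hg2, hJ]
  have hfin : (1/2 : ℝ) * (2 * J) = J + J := by
    rw [← htotal, ← hdouble, hsplit, hadd, hK]
  have hJ0 : J = 0 := by linarith
  rw [htotal, hJ0]; ring

end LobAux

/-- The Lobachevsky function is odd and π-periodic. -/
theorem lob_odd_periodic :
    (∀ θ : ℝ, lob (-θ) = -lob θ) ∧ (∀ θ : ℝ, lob (θ + π) = lob θ) := by
  constructor
  · intro θ
    show -∫ t in (0:ℝ)..(-θ), LobAux.f t = -(-∫ t in (0:ℝ)..θ, LobAux.f t)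
    have heq : (fun t => LobAux.f (-t)) = LobAux.f := funext LobAux.f_neg
    have h := intervalIntegral.integral_comp_neg (a := (0:ℝ)) (b := θ) LobAux.f
    rw [heq, neg_zero] at h
    rw [neg_neg, h, intervalIntegral.integral_symm (-θ) 0, neg_neg]
  · intro θ
    show -∫ t in (0:ℝ)..(θ+π), LobAux.f t = -∫ t in (0:ℝ)..θ, LobAux.f t
    have h := LobAux.f_periodic.intervalIntegral_add_eq_add 0 θ
      (fun a b => LobAux.intInt_f a b)
    rw [h, zero_add, LobAux.integral_f_pi, add_zero]
end
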